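/- arXiv:math/0507101 — 4 statements merged into one kernel-verified Lean document; each statement's English description precedes it below -/
import Mathlib

section
/- The diagonal inclusion of the positive integers ℕ_{>0} into Ẑ^♮ induces an isomorphism of multiplicative monoids from ℕ_{>0} onto the quotient monoid Ẑ^♮/Ẑ^×; that is, every x ∈ Ẑ^♮ can be written as x = n·u with n a positive integer and u ∈ Ẑ^×, and the positive integer n is uniquely determined by x. -/
/-!
The diagonal inclusion ℕ_{>0} → Ẑ^♮ induces an isomorphism of multiplicative monoids
ℕ_{>0} ≅ Ẑ^♮/Ẑ^×: every x ∈ Ẑ^♮ is x = n·u with n a positive integer and u ∈ Ẑ^×,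
with n uniquely determined by x.
-/

open IsDedekindDomain IsDedekindDomain.HeightOneSpectrum

noncomputable section

/-- The finite adele ring of ℚ. -/
abbrev Af : Type := FiniteAdeleRing ℤ ℚ

/-- A finite adele is integral if all its components are integral, i.e. it lies in Ẑ. -/
def IsIntegralAdele (x : Af) : Prop :=
  ∀ v : HeightOneSpectrum ℤ, x v ∈ v.adicCompletionIntegers ℚ

/-- Ẑ^×, the subgroup of A_f^× of ideles that are integral with integral inverse. -/
def zhatUnits : Subgroup Afˣ where
  carrier := {u | IsIntegralAdele (u : Af) ∧ IsIntegralAdele ((u⁻¹ : Afˣ) : Af)}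
  one_mem' := ⟨fun v => one_mem _, fun v => one_mem _⟩
  mul_mem' := by
    rintro a b ⟨ha, ha'⟩ ⟨hb, hb'⟩
    exact ⟨fun v => mul_mem (ha v) (hb v), by
      rw [mul_inv_rev]; exact fun v => mul_mem (hb' v) (ha' v)⟩
  inv_mem' := by
    rintro a ⟨ha, ha'⟩
    exact ⟨ha', by rw [inv_inv]; exact ha⟩

/-- Ẑ^♮, the submonoid of A_f^× of integral ideles. -/
def zhatNat : Submonoid Afˣ where
  carrier := {u | IsIntegralAdele (u : Af)}
  one_mem' := fun v => one_mem _
  mul_mem' := fun ha hb v => mul_mem (ha v) (hb v)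

/-- The diagonal embedding of ℚ^× into the finite ideles. -/
def diagQ : ℚˣ →* Afˣ := Units.map (algebraMap ℚ Af).toMonoidHom

/-- The positive integer `n`, viewed as a finite idele. -/
def diagNat (n : ℕ+) : Afˣ :=
  diagQ (Units.mk0 (n : ℚ) (by exact_mod_cast n.ne_zero))

open scoped Multiplicative WithZero

namespace AuxZhat

/-- valuation of component `v` of a finite adele -/
abbrev val (v : HeightOneSpectrum ℤ) (y : Af) : ℤᵐ⁰ := Valued.v (y v)

lemma val_mul (v : HeightOneSpectrum ℤ) (a b : Af) : val v (a * b) = val v a * val v b := by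
  have h : (a * b) v = a v * b v := rfl
  rw [val, h, map_mul]

lemma val_inv_mul (x : Afˣ) (v : HeightOneSpectrum ℤ) :
    val v ((x⁻¹ : Afˣ) : Af) * val v (x : Af) = 1 := by
  rw [← val_mul]
  have h : (((x⁻¹ : Afˣ) : Af) * (x : Af)) = (1 : Af) := by
    rw [← Units.val_mul, inv_mul_cancel, Units.val_one]
  rw [h]
  have h1 : (1 : Af) v = 1 := rfl
  rw [val, h1, map_one]

lemma val_ne_zero (x : Afˣ) (v : HeightOneSpectrum ℤ) : val v (x : Af) ≠ 0 :=
  right_ne_zero_of_mul_eq_one (val_inv_mul x v)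

lemma eq_one_of_mul_eq_one {a b : ℤᵐ⁰} (h : a * b = 1) (ha : a ≤ 1) (hb : b ≤ 1) : b = 1 := by
  refine le_antisymm hb ?_
  calc (1 : ℤᵐ⁰) = a * b := h.symm
    _ ≤ 1 * b := mul_le_mul_left ha b
    _ = b := one_mul b

lemma val_eq_one_of_mem (u : Afˣ) (hu : u ∈ zhatUnits) (v : HeightOneSpectrum ℤ) :
    val v (u : Af) = 1 :=
  eq_one_of_mul_eq_one (val_inv_mul u v)
    ((mem_adicCompletionIntegers _ _ _).mp (hu.2 v))
    ((mem_adicCompletionIntegers _ _ _).mp (hu.1 v))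

lemma val_diag (q : ℚ) (v : HeightOneSpectrum ℤ) :
    val v (algebraMap ℚ Af q) = v.valuation ℚ q := by
  exact valuedAdicCompletion_eq_valuation' v q

lemma val_diagNat (n : ℕ+) (v : HeightOneSpectrum ℤ) :
    val v ((diagNat n : Afˣ) : Af) = v.intValuation ((n : ℕ) : ℤ) := by
  have h : ((diagNat n : Afˣ) : Af) = algebraMap ℚ Af ((n : ℕ) : ℚ) := rfl
  rw [h, val_diag]
  have h2 : ((n : ℕ) : ℚ) = algebraMap ℤ ℚ ((n : ℕ) : ℤ) := by push_cast; ring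
  rw [h2, valuation_of_algebraMap]

lemma val_of_eq (x : Afˣ) (n : ℕ+) (u : Afˣ) (hu : u ∈ zhatUnits)
    (hx : x = diagNat n * u) (v : HeightOneSpectrum ℤ) :
    val v (x : Af) = v.intValuation ((n : ℕ) : ℤ) := by
  rw [hx, Units.val_mul, val_mul, val_diagNat, val_eq_one_of_mem u hu, mul_one]

/-- the positive prime generator of a height-one prime of ℤ -/
def genp (v : HeightOneSpectrum ℤ) : ℕ :=
  (Submodule.IsPrincipal.generator v.asIdeal).natAbs

lemma genp_span (v : HeightOneSpectrum ℤ) : v.asIdeal = Ideal.span {(genp v : ℤ)} := by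
  rw [genp, Int.span_natAbs, Ideal.span_singleton_generator]

lemma genp_ne_zero (v : HeightOneSpectrum ℤ) : (genp v : ℤ) ≠ 0 := by
  intro h
  apply v.ne_bot
  rw [genp_span v, h, Ideal.span_singleton_eq_bot]

lemma genp_pos (v : HeightOneSpectrum ℤ) : 0 < genp v :=
  Nat.pos_of_ne_zero (by exact_mod_cast genp_ne_zero v)

lemma intVal_genp_self (v : HeightOneSpectrum ℤ) :
    v.intValuation (genp v : ℤ) = Multiplicative.ofAdd (-1 : ℤ) :=
  intValuation_singleton _ (genp_ne_zero v) (genp_span v)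

lemma intVal_genp_ne (v w : HeightOneSpectrum ℤ) (hw : w ≠ v) :
    v.intValuation (genp w : ℤ) = 1 := by
  refine le_antisymm (v.intValuation_le_one _) (le_of_not_gt fun hlt => hw ?_)
  rw [intValuation_lt_one_iff_dvd, ← genp_span w] at hlt
  have hle : w.asIdeal ≤ v.asIdeal := Ideal.le_of_dvd hlt
  exact HeightOneSpectrum.ext (w.isMaximal.eq_of_le v.isPrime.ne_top hle)

lemma exists_exp {γ : ℤᵐ⁰} (h0 : γ ≠ 0) (h1 : γ ≤ 1) :
    ∃ k : ℕ, γ = Multiplicative.ofAdd (-(k : ℤ)) := by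
  obtain ⟨g, rfl⟩ := WithZero.ne_zero_iff_exists.mp h0
  refine ⟨(-Multiplicative.toAdd g).toNat, ?_⟩
  have hg : Multiplicative.toAdd g ≤ 0 := by
    rwa [← WithZero.coe_one, WithZero.coe_le_coe, ← Multiplicative.toAdd_le,
      toAdd_one] at h1
  rw [Int.toNat_of_nonneg (neg_nonneg.mpr hg), neg_neg, ofAdd_toAdd]

lemma ofAdd_pow (k : ℕ) :
    ((Multiplicative.ofAdd (-1 : ℤ) : Multiplicative ℤ) : ℤᵐ⁰) ^ k =
      ((Multiplicative.ofAdd (-(k : ℤ)) : Multiplicative ℤ) : ℤᵐ⁰) := by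
  rw [← WithZero.coe_pow, WithZero.coe_inj, ← ofAdd_nsmul]
  congr 1
  simp [nsmul_eq_mul]

/-- the height-one prime of ℤ attached to a prime number -/
def primeSpec (p : ℕ) (hp : p.Prime) : HeightOneSpectrum ℤ where
  asIdeal := Ideal.span {(p : ℤ)}
  isPrime := by
    rw [Ideal.span_singleton_prime (by exact_mod_cast hp.ne_zero)]
    exact Nat.prime_iff_prime_int.mp hp
  ne_bot := by
    rw [ne_eq, Ideal.span_singleton_eq_bot]
    exact_mod_cast hp.ne_zero

lemma intVal_eq_factorization (p : ℕ) (hp : p.Prime) (n : ℕ) (hn : n ≠ 0) :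
    (primeSpec p hp).intValuation ((n : ℕ) : ℤ) =
      Multiplicative.ofAdd (-(n.factorization p : ℤ)) := by
  set v := primeSpec p hp with hv
  set a := n.factorization p with ha
  have hvp : v.intValuation ((p : ℕ) : ℤ) = Multiplicative.ofAdd (-1 : ℤ) :=
    intValuation_singleton _ (by exact_mod_cast hp.ne_zero) rfl
  have hc : v.intValuation ((n / p ^ a : ℕ) : ℤ) = 1 := by
    refine le_antisymm (v.intValuation_le_one _) (le_of_not_gt fun hlt => ?_)
    rw [intValuation_lt_one_iff_dvd] at hlt
    have : v.asIdeal = Ideal.span {((p : ℕ) : ℤ)} := rfl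
    rw [this, span_singleton_dvd_span_singleton_iff_dvd, Int.natCast_dvd_natCast] at hlt
    exact Nat.not_dvd_ordCompl hp hn hlt
  have hdecomp : (n : ℤ) = ((p : ℕ) : ℤ) ^ a * ((n / p ^ a : ℕ) : ℤ) := by
    rw [← Nat.cast_pow, ← Nat.cast_mul]
    exact_mod_cast (Nat.ordProj_mul_ordCompl_eq_self n p).symm
  rw [hdecomp, map_mul, map_pow, hvp, hc, mul_one, ofAdd_pow]

lemma pnat_eq_of_intVal_eq (n m : ℕ+)
    (h : ∀ v : HeightOneSpectrum ℤ,
      v.intValuation (((n : ℕ) : ℤ)) = v.intValuation (((m : ℕ) : ℤ))) : n = m := by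
  have hfac : (n : ℕ).factorization = (m : ℕ).factorization := by
    ext p
    by_cases hp : p.Prime
    · have hh := h (primeSpec p hp)
      rw [intVal_eq_factorization p hp n n.ne_zero,
        intVal_eq_factorization p hp m m.ne_zero, WithZero.coe_inj,
        Multiplicative.ofAdd.injective.eq_iff, neg_inj, Int.natCast_inj] at hh
      exact hh
    · simp [Nat.factorization_eq_zero_of_not_prime _ hp]
  exact PNat.coe_injective (Nat.factorization_inj n.ne_zero m.ne_zero hfac)

end AuxZhat

open AuxZhat in
/-- ℕ_{>0} ≅ Ẑ^♮/Ẑ^×: every integral finite idele `x` is `n·u` for a unique positive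
integer `n` and some `u ∈ Ẑ^×`. -/
theorem natPos_monoidIso_zhatNat_mod_zhatUnits (x : Afˣ) (hx : x ∈ zhatNat) :
    ∃! n : ℕ+, ∃ u ∈ zhatUnits, x = diagNat n * u := by
  classical
  have hne : ∀ v, val v (x : Af) ≠ 0 := val_ne_zero x
  have hle : ∀ v, val v (x : Af) ≤ 1 := fun v => by
    exact (mem_adicCompletionIntegers _ _ _).mp (hx v)
  choose k hk using fun v => exists_exp (hne v) (hle v)
  -- the support is finite
  have hTfin : {v : HeightOneSpectrum ℤ | val v (x : Af) ≠ 1}.Finite := by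
    refine Set.Finite.subset (Filter.eventually_cofinite.mp
      (((x⁻¹ : Afˣ) : Af).2)) fun v hv => ?_
    intro hmem
    exact hv (eq_one_of_mul_eq_one (val_inv_mul x v)
      ((mem_adicCompletionIntegers _ _ _).mp hmem) (hle v))
  set T := hTfin.toFinset with hT
  have hNpos : 0 < ∏ v ∈ T, genp v ^ k v :=
    Finset.prod_pos fun v _ => pow_pos (genp_pos v) _
  set n : ℕ+ := ⟨∏ v ∈ T, genp v ^ k v, hNpos⟩ with hn
  -- key valuation computation
  have hNval : ∀ v : HeightOneSpectrum ℤ,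
      v.intValuation (((n : ℕ) : ℤ)) = val v (x : Af) := by
    intro v
    have hcast : (((n : ℕ) : ℤ)) = ∏ w ∈ T, ((genp w : ℤ)) ^ k w := by
      show ((∏ w ∈ T, genp w ^ k w : ℕ) : ℤ) = _
      push_cast
      rfl
    rw [hcast, map_prod]
    by_cases hv : v ∈ T
    · rw [Finset.prod_eq_single_of_mem v hv (fun w _ hwv => by
        rw [map_pow, intVal_genp_ne v w hwv, one_pow]),
        map_pow, intVal_genp_self, ofAdd_pow, ← hk v]
    · rw [Finset.prod_eq_one fun w hw => by
        rw [map_pow, intVal_genp_ne v w (fun hh => hv (hh ▸ hw)), one_pow]]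
      have : val v (x : Af) = 1 := by
        by_contra hcon
        exact hv (hTfin.mem_toFinset.mpr hcon)
      rw [this]
  refine ⟨n, ⟨(diagNat n)⁻¹ * x, ?_, by rw [mul_inv_cancel_left]⟩, ?_⟩
  · -- (diagNat n)⁻¹ * x ∈ zhatUnits
    have hdval : ∀ v, val v ((diagNat n : Afˣ) : Af) = val v (x : Af) := fun v => by
      rw [val_diagNat, hNval]
    have hdinv : ∀ v, val v (((diagNat n)⁻¹ : Afˣ) : Af) = (val v (x : Af))⁻¹ := fun v => by
      have h1 := val_inv_mul (diagNat n) v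
      rw [hdval v] at h1
      exact eq_inv_of_mul_eq_one_left h1
    constructor
    · intro v
      rw [mem_adicCompletionIntegers]
      have : val v (((diagNat n)⁻¹ * x : Afˣ) : Af) = 1 := by
        rw [Units.val_mul, val_mul, hdinv v, inv_mul_cancel₀ (hne v)]
      exact le_of_eq this
    · intro v
      rw [mem_adicCompletionIntegers]
      have h2 : (((diagNat n)⁻¹ * x : Afˣ)⁻¹ : Afˣ) = x⁻¹ * diagNat n := by
        rw [mul_inv_rev, inv_inv]
      have : val v ((((diagNat n)⁻¹ * x : Afˣ)⁻¹ : Afˣ) : Af) = 1 := by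
        rw [h2, Units.val_mul, val_mul, hdval v, val_inv_mul x v]
      exact le_of_eq this
  · -- uniqueness
    rintro m ⟨u', hu', hxm⟩
    refine pnat_eq_of_intVal_eq m n fun v => ?_
    rw [← val_of_eq x m u' hu' hxm v, hNval v]
end
end

section
/- Let Sh denote the quotient of {±1} × A_f^× by the action of ℚ^× given by q·(ε, l) = (sign(q)·ε, q·l), with classes written [ε, l]. Let U^princ := {(g, ρ, ε) ∈ ℚ^× × Ẑ × {±1} : g·ρ ∈ Ẑ} with the action of {±1} × {±1} given by (γ₁, γ₂)·(g, ρ, ε) = (γ₁·g·γ₂⁻¹, γ₂·ρ, γ₂·ε), and let U := {(g, ρ, s) ∈ A_f^× × Ẑ × Sh : g·ρ ∈ Ẑ} with the action of Ẑ^× × Ẑ^× given by (γ₁, γ₂)·(g, ρ, [ε, l]) = (γ₁·g·γ₂⁻¹, γ₂·ρ, [ε, l·γ₂⁻¹]). Then the map (g, ρ, ε) ↦ (g, ρ, [ε, 1]) induces a bijection from the quotient ({±1} × {±1})\U^princ onto the quotient (Ẑ^× × Ẑ^×)\U. -/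
open IsDedekindDomain IsDedekindDomain.HeightOneSpectrum

noncomputable section

/-- The sign of a nonzero rational, as an element of {±1} = ℤˣ. -/
def signQ (q : ℚˣ) : ℤˣ := if 0 < (q : ℚ) then 1 else -1

/-- The action of ℚ^× on {±1} × A_f^×: q·(ε, l) = (sign(q)·ε, q·l). -/
def relSh : (ℤˣ × Afˣ) → (ℤˣ × Afˣ) → Prop := fun p p' =>
  ∃ q : ℚˣ, p'.1 = signQ q * p.1 ∧ p'.2 = diagQ q * p.2

/-- Sh(𝔾_m, {±1}) = ℚ^×\({±1} × A_f^×). -/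
def Sh : Type := Quot relSh

/-- Right multiplication by an idele on Sh(𝔾_m, {±1}). -/
def shMul (c : Afˣ) : Sh → Sh :=
  Quot.lift (fun p => Quot.mk relSh (p.1, p.2 * c))
    (by
      rintro ⟨ε, l⟩ ⟨ε', l'⟩ ⟨q, h1, h2⟩
      exact Quot.sound ⟨q, h1, by rw [h2, mul_assoc]⟩)

/-- U^princ: triples (g, ρ, ε) ∈ ℚ^× × Ẑ × {±1} with g·ρ ∈ Ẑ. -/
def UPrinc : Type :=
  {t : ℚ × Af × ℤˣ //
    t.1 ≠ 0 ∧ IsIntegralAdele t.2.1 ∧ IsIntegralAdele (algebraMap ℚ Af t.1 * t.2.1)}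

/-- The action of {±1} × {±1} on U^princ. -/
def relPrinc : UPrinc → UPrinc → Prop := fun u u' => ∃ γ₁ γ₂ : ℤˣ,
  u'.1.1 = ((γ₁ : ℤ) : ℚ) * u.1.1 * (((γ₂ : ℤ) : ℚ))⁻¹ ∧
  u'.1.2.1 = algebraMap ℚ Af ((γ₂ : ℤ) : ℚ) * u.1.2.1 ∧
  u'.1.2.2 = γ₂ * u.1.2.2

/-- U: triples (g, ρ, s) ∈ A_f^× × Ẑ × Sh with g·ρ ∈ Ẑ. -/
def UFull : Type :=
  {t : Afˣ × Af × Sh // IsIntegralAdele t.2.1 ∧ IsIntegralAdele ((t.1 : Af) * t.2.1)}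

/-- The action of Ẑ^× × Ẑ^× on U:
(γ₁, γ₂)·(g, ρ, [ε, l]) = (γ₁·g·γ₂⁻¹, γ₂·ρ, [ε, l·γ₂⁻¹]). -/
def relFull : UFull → UFull → Prop := fun u u' => ∃ γ₁ γ₂ : zhatUnits,
  u'.1.1 = (γ₁ : Afˣ) * u.1.1 * ((γ₂ : Afˣ))⁻¹ ∧
  u'.1.2.1 = ((γ₂ : Afˣ) : Af) * u.1.2.1 ∧
  u'.1.2.2 = shMul ((γ₂ : Afˣ)⁻¹) u.1.2.2

/-- The map (g, ρ, ε) ↦ (g, ρ, [ε, 1]) from U^princ to U. -/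
def embed (u : UPrinc) : UFull :=
  ⟨(diagQ (Units.mk0 u.1.1 u.2.1), u.1.2.1, Quot.mk relSh (u.1.2.2, 1)),
    u.2.2.1, u.2.2.2⟩


-- ## Auxiliary lemmas

lemma Af.mul_apply (x y : Af) (v : HeightOneSpectrum ℤ) : (x * y) v = x v * y v := rfl

lemma Af.one_apply (v : HeightOneSpectrum ℤ) : (1 : Af) v = 1 := rfl

lemma Af.algebraMap_apply (q : ℚ) (v : HeightOneSpectrum ℤ) :
    (algebraMap ℚ Af q) v = algebraMap ℚ (v.adicCompletion ℚ) q := rfl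

lemma val_algebraMap (q : ℚ) (v : HeightOneSpectrum ℤ) :
    Valued.v ((algebraMap ℚ Af q) v) = v.valuation ℚ q :=
  valuedAdicCompletion_eq_valuation' v q

lemma diagQ_coe (q : ℚˣ) : ((diagQ q : Afˣ) : Af) = algebraMap ℚ Af (q : ℚ) := rfl

lemma unit_comp_mul_inv (x : Afˣ) (v : HeightOneSpectrum ℤ) :
    (x : Af) v * ((x⁻¹ : Afˣ) : Af) v = 1 := by
  rw [← Af.mul_apply, ← Units.val_mul, mul_inv_cancel, Units.val_one, Af.one_apply]

lemma val_unit_mul_inv (x : Afˣ) (v : HeightOneSpectrum ℤ) :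
    Valued.v ((x : Af) v) * Valued.v (((x⁻¹ : Afˣ) : Af) v) = 1 := by
  rw [← Valuation.map_mul, unit_comp_mul_inv, Valuation.map_one]

lemma val_unit_ne_zero (x : Afˣ) (v : HeightOneSpectrum ℤ) :
    Valued.v ((x : Af) v) ≠ 0 :=
  left_ne_zero_of_mul_eq_one (val_unit_mul_inv x v)

lemma isIntegralAdele_iff (x : Af) : IsIntegralAdele x ↔ ∀ v, Valued.v (x v) ≤ 1 := by
  unfold IsIntegralAdele
  simp_rw [mem_adicCompletionIntegers]

lemma mem_zhat_of_val_eq_one (u : Afˣ) (h : ∀ v, Valued.v ((u : Af) v) = 1) :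
    u ∈ zhatUnits := by
  constructor
  · rw [isIntegralAdele_iff]; exact fun v => le_of_eq (h v)
  · rw [isIntegralAdele_iff]
    intro v
    have := val_unit_mul_inv u v
    rw [h v, one_mul] at this
    exact le_of_eq this

lemma val_eq_one_of_mem_zhat {u : Afˣ} (h : u ∈ zhatUnits) (v : HeightOneSpectrum ℤ) :
    Valued.v ((u : Af) v) = 1 := by
  refine le_antisymm ((isIntegralAdele_iff _).mp h.1 v) ?_
  have hb := (isIntegralAdele_iff _).mp h.2 v
  have hm := val_unit_mul_inv u v
  calc (1 : WithZero (Multiplicative ℤ)) = _ := hm.symm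
    _ ≤ Valued.v ((u : Af) v) * 1 := mul_le_mul_right hb _
    _ = Valued.v ((u : Af) v) := mul_one _

lemma intVal_eq (v : HeightOneSpectrum ℤ) (r : ℤ) : v.intValuation r = v.intValuationDef r := rfl

/-- a generator of the prime ideal of v -/
def genOf (v : HeightOneSpectrum ℤ) : ℤ := Submodule.IsPrincipal.generator v.asIdeal

lemma genOf_spec (v : HeightOneSpectrum ℤ) : Ideal.span {genOf v} = v.asIdeal :=
  Ideal.span_singleton_generator v.asIdeal

lemma genOf_ne_zero (v : HeightOneSpectrum ℤ) : genOf v ≠ 0 := by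
  intro h
  apply v.ne_bot
  rw [← genOf_spec v, h, Ideal.span_singleton_eq_bot]

lemma intVal_genOf_self (v : HeightOneSpectrum ℤ) :
    v.intValuationDef (genOf v) = Multiplicative.ofAdd (-1 : ℤ) :=
  intValuation_singleton v (genOf_ne_zero v) (genOf_spec v).symm

lemma intVal_genOf_ne {v w : HeightOneSpectrum ℤ} (hvw : v ≠ w) :
    w.intValuationDef (genOf v) = 1 := by
  refine le_antisymm (intValuation_le_one w _) ?_
  by_contra hlt
  rw [not_le] at hlt
  have h2 : _ < _ := hlt
  rw [← intVal_eq, intValuation_lt_one_iff_dvd, genOf_spec] at h2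
  have hle : v.asIdeal ≤ w.asIdeal := Ideal.le_of_dvd h2
  exact hvw (HeightOneSpectrum.ext (v.isMaximal.eq_of_le w.isMaximal.ne_top hle))

lemma qcast_genOf (v : HeightOneSpectrum ℤ) :
    ((genOf v : ℤ) : ℚ) = algebraMap ℤ ℚ (genOf v) := by simp

lemma val_genOf_self (v : HeightOneSpectrum ℤ) :
    v.valuation ℚ ((genOf v : ℤ) : ℚ) =
      ((Multiplicative.ofAdd (-1 : ℤ) : Multiplicative ℤ) : WithZero (Multiplicative ℤ)) := by
  rw [qcast_genOf, valuation_of_algebraMap, intVal_eq]; exact intVal_genOf_self v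

lemma val_genOf_ne {v w : HeightOneSpectrum ℤ} (hvw : v ≠ w) :
    w.valuation ℚ ((genOf v : ℤ) : ℚ) = 1 := by
  rw [qcast_genOf, valuation_of_algebraMap, intVal_eq]; exact intVal_genOf_ne hvw

def vOf (p : ℕ) (hp : p.Prime) : HeightOneSpectrum ℤ where
  asIdeal := Ideal.span {(p : ℤ)}
  isPrime := by
    rw [Ideal.span_singleton_prime (by exact_mod_cast hp.ne_zero)]
    exact Nat.prime_iff_prime_int.mp hp
  ne_bot := by
    simp [Ideal.span_singleton_eq_bot, hp.ne_zero]

lemma int_of_val_le_one (q : ℚ) (h : ∀ v : HeightOneSpectrum ℤ, v.valuation ℚ q ≤ 1) :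
    ∃ n : ℤ, q = (n : ℚ) := by
  refine ⟨q.num, ?_⟩
  suffices hd : q.den = 1 by
    conv_lhs => rw [← Rat.num_div_den q]
    rw [hd]; simp
  by_contra hden
  obtain ⟨p, hp, hpd⟩ := Nat.exists_prime_and_dvd hden
  set v := vOf p hp with hv
  have hnum : v.valuation ℚ (algebraMap ℤ ℚ q.num) = 1 := by
    refine le_antisymm (valuation_le_one v _) ?_
    rw [valuation_of_algebraMap, intVal_eq]
    by_contra hlt
    rw [not_le, ← intVal_eq, intValuation_lt_one_iff_dvd] at hlt
    replace hlt : Ideal.span {(p:ℤ)} ∣ Ideal.span {q.num} := hlt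
    rw [span_singleton_dvd_span_singleton_iff_dvd] at hlt
    have h2 : p ∣ q.num.natAbs := Int.ofNat_dvd_right.mp (Int.dvd_natAbs.mpr hlt)
    have h3 := Nat.dvd_gcd h2 hpd
    rw [Nat.Coprime.gcd_eq_one q.reduced] at h3
    exact hp.ne_one (Nat.dvd_one.mp h3)
  have hval : v.asIdeal ∣ Ideal.span {(q.den : ℤ)} := by
    rw [hv]
    show Ideal.span {(p:ℤ)} ∣ _
    rw [span_singleton_dvd_span_singleton_iff_dvd]
    exact_mod_cast hpd
  have hden' : v.intValuationDef (q.den : ℤ) < 1 := by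
    rw [← intVal_eq, intValuation_lt_one_iff_dvd]; exact hval
  have hq : q * algebraMap ℤ ℚ (q.den : ℤ) = algebraMap ℤ ℚ q.num := by
    push_cast
    exact_mod_cast Rat.mul_den_eq_num q
  have := congrArg (v.valuation ℚ) hq
  rw [Valuation.map_mul, hnum, valuation_of_algebraMap, intVal_eq] at this
  have hle : v.valuation ℚ q * v.intValuationDef (q.den:ℤ) ≤ 1 * v.intValuationDef (q.den:ℤ) :=
    mul_le_mul_left (h v) _
  rw [this, one_mul] at hle
  exact absurd (lt_of_le_of_lt hle hden') (by simp)

lemma strong_approximation (x : Afˣ) :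
    ∃ (q : ℚˣ) (γ : Afˣ), γ ∈ zhatUnits ∧ x = diagQ q * γ := by
  classical
  -- the finite set of bad places
  have hfin : {v : HeightOneSpectrum ℤ | Valued.v ((x : Af) v) ≠ 1}.Finite := by
    have h1 : {v : HeightOneSpectrum ℤ | (x : Af) v ∉ v.adicCompletionIntegers ℚ}.Finite :=
      Filter.eventually_cofinite.mp (x : Af).2
    have h2 : {v : HeightOneSpectrum ℤ |
        ((x⁻¹ : Afˣ) : Af) v ∉ v.adicCompletionIntegers ℚ}.Finite :=
      Filter.eventually_cofinite.mp ((x⁻¹ : Afˣ) : Af).2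
    refine (h1.union h2).subset ?_
    intro v hv
    by_contra hcon
    simp only [Set.mem_union, Set.mem_setOf_eq, not_or, not_not] at hcon
    apply hv
    refine le_antisymm ((mem_adicCompletionIntegers _ _ _).mp hcon.1) ?_
    have hb := (mem_adicCompletionIntegers _ _ _).mp hcon.2
    have hm := val_unit_mul_inv x v
    calc (1 : WithZero (Multiplicative ℤ)) = _ := hm.symm
      _ ≤ Valued.v ((x : Af) v) * 1 := mul_le_mul_right hb _
      _ = Valued.v ((x : Af) v) := mul_one _
  set T := hfin.toFinset with hT
  -- exponents
  have hne : ∀ v : HeightOneSpectrum ℤ, Valued.v ((x : Af) v) ≠ 0 := val_unit_ne_zero x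
  set e : HeightOneSpectrum ℤ → ℤ :=
    fun v => -(Multiplicative.toAdd (WithZero.unzero (hne v))) with he
  set q₀ : ℚ := ∏ v ∈ T, ((genOf v : ℤ) : ℚ) ^ (e v) with hq₀
  have hq₀ne : q₀ ≠ 0 := by
    rw [hq₀]
    refine Finset.prod_ne_zero_iff.mpr fun v _ => ?_
    exact zpow_ne_zero _ (by exact_mod_cast genOf_ne_zero v)
  set qu : ℚˣ := Units.mk0 q₀ hq₀ne with hqu
  -- valuation of q₀
  have hvalq : ∀ w : HeightOneSpectrum ℤ, w.valuation ℚ q₀ = Valued.v ((x : Af) w) := by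
    intro w
    have hmap : w.valuation ℚ q₀ = ∏ v ∈ T, (w.valuation ℚ ((genOf v : ℤ) : ℚ)) ^ (e v) := by
      rw [hq₀, map_prod]
      exact Finset.prod_congr rfl fun v _ => map_zpow₀ (w.valuation ℚ) _ _
    by_cases hw : w ∈ T
    · rw [hmap, Finset.prod_eq_single_of_mem w hw (fun v _ hvw => by
        rw [val_genOf_ne hvw, one_zpow]), val_genOf_self]
      rw [← WithZero.coe_zpow, ← ofAdd_zsmul]
      have h1 : (e w) • (-1 : ℤ) = Multiplicative.toAdd (WithZero.unzero (hne w)) := by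
        simp [he, smul_eq_mul]
      rw [h1, ofAdd_toAdd, WithZero.coe_unzero]
    · rw [hmap, Finset.prod_eq_one fun v hv => by
        rw [val_genOf_ne (fun h : v = w => hw (h ▸ hv)), one_zpow]]
      have : w ∉ {v : HeightOneSpectrum ℤ | Valued.v ((x : Af) v) ≠ 1} := by
        rwa [← hfin.mem_toFinset]
      simp only [Set.mem_setOf_eq, not_not] at this
      rw [this]
  -- conclude
  refine ⟨qu, (diagQ qu)⁻¹ * x, mem_zhat_of_val_eq_one _ ?_, by rw [← mul_assoc, mul_inv_cancel, one_mul]⟩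
  intro v
  have hcoe : (((diagQ qu)⁻¹ * x : Afˣ) : Af) v
      = (((diagQ qu)⁻¹ : Afˣ) : Af) v * (x : Af) v := by
    rw [Units.val_mul]; rfl
  show Valued.v ((((diagQ qu)⁻¹ * x : Afˣ) : Af) v) = 1
  rw [hcoe, Valuation.map_mul]
  have h2 : (((diagQ qu)⁻¹ : Afˣ) : Af) = algebraMap ℚ Af ((qu⁻¹ : ℚˣ) : ℚ) := by
    rw [← map_inv diagQ qu, diagQ_coe]
  rw [h2, val_algebraMap]
  have h3 : ((qu⁻¹ : ℚˣ) : ℚ) = q₀⁻¹ := rfl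
  rw [h3, map_inv₀, hvalq v, inv_mul_cancel₀ (hne v)]

lemma diag_val (q : ℚˣ) (v : HeightOneSpectrum ℤ) :
    Valued.v (((diagQ q : Afˣ) : Af) v) = v.valuation ℚ (q : ℚ) := by
  rw [diagQ_coe]; exact val_algebraMap _ v

lemma eq_pm_one_of_diag_mem {q : ℚˣ} (h : diagQ q ∈ zhatUnits) :
    (q : ℚ) = 1 ∨ (q : ℚ) = -1 := by
  have hval : ∀ v : HeightOneSpectrum ℤ, v.valuation ℚ (q : ℚ) = 1 := by
    intro v
    rw [← diag_val q v]
    exact val_eq_one_of_mem_zhat h v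
  have hval' : ∀ v : HeightOneSpectrum ℤ, v.valuation ℚ ((q : ℚ)⁻¹) = 1 := by
    intro v
    rw [map_inv₀, hval v, inv_one]
  obtain ⟨n, hn⟩ := int_of_val_le_one (q : ℚ) fun v => le_of_eq (hval v)
  obtain ⟨m, hm⟩ := int_of_val_le_one ((q : ℚ)⁻¹) fun v => le_of_eq (hval' v)
  have hnm : (n : ℚ) * (m : ℚ) = 1 := by
    rw [← hn, ← hm, mul_inv_cancel₀ (Units.ne_zero q)]
  have : n = 1 ∨ n = -1 := by
    rw [Int.isUnit_iff.symm]
    exact IsUnit.of_mul_eq_one (a := n) m (by exact_mod_cast hnm)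
  rcases this with h1 | h1 <;> [left; right] <;> rw [hn, h1] <;> norm_num

/-- ℤˣ → ℚˣ -/
def qofZ : ℤˣ →* ℚˣ := Units.map (Int.castRingHom ℚ).toMonoidHom

lemma qofZ_coe (γ : ℤˣ) : ((qofZ γ : ℚˣ) : ℚ) = ((γ : ℤ) : ℚ) := rfl

lemma diag_int_mem (γ : ℤˣ) : diagQ (qofZ γ) ∈ zhatUnits := by
  apply mem_zhat_of_val_eq_one
  intro v
  rw [diag_val, qofZ_coe]
  rcases Int.units_eq_one_or γ with rfl | rfl
  · simp
  · push_cast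
    rw [Valuation.map_neg, Valuation.map_one]

/-- ℤˣ → Ẑˣ -/
def zToZhat (γ : ℤˣ) : zhatUnits := ⟨diagQ (qofZ γ), diag_int_mem γ⟩

lemma signQ_one : signQ 1 = 1 := by simp [signQ]

lemma signQ_neg_one : signQ (-1) = -1 := by
  unfold signQ
  rw [if_neg]
  norm_num

lemma signQ_qofZ (γ : ℤˣ) : signQ (qofZ γ) = γ := by
  rcases Int.units_eq_one_or γ with rfl | rfl
  · rw [map_one, signQ_one]
  · have h : ((qofZ (-1 : ℤˣ) : ℚˣ) : ℚ) = -1 := by rw [qofZ_coe]; norm_num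
    simp [signQ, h]

lemma signQ_mul (a b : ℚˣ) : signQ (a * b) = signQ a * signQ b := by
  unfold signQ
  rcases (Units.ne_zero a).lt_or_gt with ha | ha <;>
    rcases (Units.ne_zero b).lt_or_gt with hb | hb <;>
    rw [Units.val_mul]
  · rw [if_pos (by nlinarith), if_neg (by nlinarith), if_neg (by nlinarith)]; norm_num
  · rw [if_neg (by nlinarith), if_neg (by nlinarith), if_pos hb]; norm_num
  · rw [if_neg (by nlinarith), if_pos ha, if_neg (by nlinarith)]; norm_num
  · rw [if_pos (by nlinarith), if_pos ha, if_pos hb]; norm_num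

lemma signQ_inv (a : ℚˣ) : signQ a⁻¹ = signQ a := by
  unfold signQ
  rw [Units.val_inv_eq_inv_val]
  simp [inv_pos]

lemma signQ_sq (a : ℚˣ) : signQ a * signQ a = 1 := by
  unfold signQ
  split_ifs <;> norm_num

lemma relSh_equiv : Equivalence relSh := by
  constructor
  · intro p
    exact ⟨1, by rw [signQ_one, one_mul], by rw [map_one, one_mul]⟩
  · rintro p p' ⟨q, h1, h2⟩
    refine ⟨q⁻¹, ?_, ?_⟩
    · rw [signQ_inv, h1, ← mul_assoc, signQ_sq, one_mul]
    · rw [map_inv, h2, inv_mul_cancel_left]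
  · rintro p p' p'' ⟨q, h1, h2⟩ ⟨q', h1', h2'⟩
    refine ⟨q' * q, ?_, ?_⟩
    · rw [signQ_mul, h1', h1, mul_assoc]
    · rw [map_mul, h2', h2, mul_assoc]

lemma shMul_mk (c : Afˣ) (ε : ℤˣ) (l : Afˣ) :
    shMul c (Quot.mk relSh (ε, l)) = Quot.mk relSh (ε, l * c) := rfl

lemma shMul_shMul (c d : Afˣ) (s : Sh) : shMul d (shMul c s) = shMul (c * d) s := by
  induction s using Quot.ind with
  | _ p =>
    rcases p with ⟨ε, l⟩
    rw [shMul_mk, shMul_mk, shMul_mk, mul_assoc]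

lemma shMul_one (s : Sh) : shMul 1 s = s := by
  induction s using Quot.ind with
  | _ p =>
    rcases p with ⟨ε, l⟩
    rw [shMul_mk, mul_one]

lemma relFull_equiv : Equivalence relFull := by
  constructor
  · intro u
    refine ⟨1, 1, ?_, ?_, ?_⟩
    · rw [OneMemClass.coe_one, one_mul, inv_one, mul_one]
    · rw [OneMemClass.coe_one, Units.val_one, one_mul]
    · rw [OneMemClass.coe_one, inv_one, shMul_one]
  · rintro u u' ⟨γ₁, γ₂, h1, h2, h3⟩
    refine ⟨γ₁⁻¹, γ₂⁻¹, ?_, ?_, ?_⟩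
    · rw [h1]
      simp only [InvMemClass.coe_inv]
      group
    · rw [h2, ← mul_assoc, InvMemClass.coe_inv, ← Units.val_mul, inv_mul_cancel,
        Units.val_one, one_mul]
    · rw [h3, shMul_shMul, InvMemClass.coe_inv, inv_inv, inv_mul_cancel, shMul_one]
  · rintro u u' u'' ⟨γ₁, γ₂, h1, h2, h3⟩ ⟨δ₁, δ₂, h1', h2', h3'⟩
    refine ⟨δ₁ * γ₁, δ₂ * γ₂, ?_, ?_, ?_⟩
    · rw [h1', h1]
      simp only [MulMemClass.coe_mul]
      group
    · rw [h2', h2, MulMemClass.coe_mul, Units.val_mul, mul_assoc]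
    · rw [h3', h3, shMul_shMul, MulMemClass.coe_mul, mul_inv_rev]

lemma int_units_inv (δ : ℤˣ) : δ⁻¹ = δ := by
  rcases Int.units_eq_one_or δ with rfl | rfl <;> simp

lemma exists_qofZ {a : ℚˣ} (h : (a : ℚ) = 1 ∨ (a : ℚ) = -1) : ∃ δ : ℤˣ, a = qofZ δ := by
  rcases h with h | h
  · exact ⟨1, Units.ext (by rw [h, map_one, Units.val_one])⟩
  · refine ⟨-1, Units.ext ?_⟩
    rw [h, qofZ_coe]
    norm_num

lemma key_forward {u u' : UPrinc} (h : relPrinc u u') : relFull (embed u) (embed u') := by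
  obtain ⟨γ₁, γ₂, h1, h2, h3⟩ := h
  refine ⟨zToZhat γ₁, zToZhat γ₂, ?_, ?_, ?_⟩
  · show diagQ (Units.mk0 u'.1.1 u'.2.1)
      = diagQ (qofZ γ₁) * diagQ (Units.mk0 u.1.1 u.2.1) * (diagQ (qofZ γ₂))⁻¹
    rw [← map_inv, ← map_mul, ← map_mul]
    congr 1
    apply Units.ext
    rw [Units.val_mul, Units.val_mul, Units.val_inv_eq_inv_val, qofZ_coe, qofZ_coe]
    exact h1
  · show u'.1.2.1 = ((diagQ (qofZ γ₂) : Afˣ) : Af) * u.1.2.1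
    rw [diagQ_coe, qofZ_coe]
    exact h2
  · show Quot.mk relSh (u'.1.2.2, 1) = shMul ((diagQ (qofZ γ₂) : Afˣ))⁻¹ (Quot.mk relSh (u.1.2.2, 1))
    rw [shMul_mk]
    refine (Quot.sound ⟨qofZ γ₂, ?_, ?_⟩).symm
    · rw [signQ_qofZ]
      exact h3
    · rw [one_mul, mul_inv_cancel]

lemma key_backward {u u' : UPrinc} (h : relFull (embed u) (embed u')) : relPrinc u u' := by
  obtain ⟨γ₁, γ₂, h1, h2, h3⟩ := h
  have hg : u.1.1 ≠ 0 := u.2.1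
  have hg' : u'.1.1 ≠ 0 := u'.2.1
  replace h3 : Quot.mk relSh (u'.1.2.2, 1)
      = Quot.mk relSh (u.1.2.2, 1 * ((γ₂ : Afˣ))⁻¹) := h3
  obtain ⟨q, hq1, hq2⟩ := (relSh_equiv.eqvGen_iff).mp (Quot.eqvGen_exact h3)
  rw [one_mul] at hq2
  rw [mul_one] at hq2
  -- γ₂ = diagQ q⁻¹
  have hγ₂ : ((γ₂ : Afˣ)) = (diagQ q)⁻¹ := by
    rw [← hq2, inv_inv]
  have hqmem : diagQ q⁻¹ ∈ zhatUnits := by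
    rw [map_inv, ← hγ₂]
    exact SetLike.coe_mem γ₂
  obtain ⟨δ₂, hδ₂⟩ := exists_qofZ (eq_pm_one_of_diag_mem hqmem)
  have hqd : q = qofZ δ₂⁻¹ := by
    rw [map_inv, ← hδ₂, inv_inv]
  -- γ₁ = diagQ r
  have hγ₁ : ((γ₁ : Afˣ))
      = diagQ (Units.mk0 u'.1.1 u'.2.1 * q⁻¹ * (Units.mk0 u.1.1 u.2.1)⁻¹) := by
    rw [map_mul, map_mul, map_inv, map_inv, ← hγ₂]
    have : diagQ (Units.mk0 u'.1.1 u'.2.1)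
        = (γ₁ : Afˣ) * diagQ (Units.mk0 u.1.1 u.2.1) * ((γ₂ : Afˣ))⁻¹ := h1
    rw [this]
    simp [mul_comm, mul_assoc, mul_left_comm]
  have hrmem : diagQ (Units.mk0 u'.1.1 u'.2.1 * q⁻¹ * (Units.mk0 u.1.1 u.2.1)⁻¹) ∈ zhatUnits := by
    rw [← hγ₁]
    exact SetLike.coe_mem γ₁
  obtain ⟨δ₁, hδ₁⟩ := exists_qofZ (eq_pm_one_of_diag_mem hrmem)
  have hδ₁' : u'.1.1 * ((q⁻¹ : ℚˣ) : ℚ) * (u.1.1)⁻¹ = ((δ₁ : ℤ) : ℚ) := by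
    have := congrArg (Units.val) hδ₁
    rw [Units.val_mul, Units.val_mul, qofZ_coe] at this
    exact this
  have hqinv : ((q⁻¹ : ℚˣ) : ℚ) = ((δ₂ : ℤ) : ℚ) := by
    rw [hδ₂]; exact qofZ_coe δ₂
  have hδ₂ne : ((δ₂ : ℤ) : ℚ) ≠ 0 := by
    rcases Int.units_eq_one_or δ₂ with rfl | rfl <;> norm_num
  refine ⟨δ₁, δ₂, ?_, ?_, ?_⟩
  · rw [hqinv] at hδ₁'
    field_simp at hδ₁' ⊢
    linarith [hδ₁']
  · replace h2 : u'.1.2.1 = ((γ₂ : Afˣ) : Af) * u.1.2.1 := h2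
    rw [hγ₂, ← map_inv, hδ₂, diagQ_coe, qofZ_coe] at h2
    exact h2
  · replace hq1 : u.1.2.2 = signQ q * u'.1.2.2 := hq1
    rw [hqd, signQ_qofZ, int_units_inv] at hq1
    have hsq : δ₂ * δ₂ = 1 := by rcases Int.units_eq_one_or δ₂ with rfl | rfl <;> simp
    rw [hq1, ← mul_assoc, hsq, one_mul]

lemma exists_embed (w : UFull) : ∃ t : UPrinc, relFull w (embed t) := by
  obtain ⟨⟨g, ρ, s⟩, hρ, hgρ⟩ := w
  obtain ⟨⟨ε, l⟩, rfl⟩ := Quot.exists_rep s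
  obtain ⟨q2, γ₂, hγ₂mem, hl⟩ := strong_approximation l
  obtain ⟨q1, γ₁', hγ₁mem, hg1⟩ := strong_approximation (g * γ₂⁻¹)
  have hudiag : diagQ q1 * γ₂ = γ₁'⁻¹ * g := by
    have : diagQ q1 = g * γ₂⁻¹ * γ₁'⁻¹ := by rw [hg1, mul_inv_cancel_right]
    rw [this]
    simp [mul_comm, mul_assoc, mul_left_comm]
  have hkey : algebraMap ℚ Af (q1 : ℚ) * (((γ₂ : Afˣ) : Af) * ρ)
      = ((γ₁'⁻¹ : Afˣ) : Af) * (((g : Afˣ) : Af) * ρ) := by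
    rw [← diagQ_coe, ← mul_assoc, ← Units.val_mul, hudiag, Units.val_mul, mul_assoc]
  refine ⟨⟨((q1 : ℚ), ((γ₂ : Afˣ) : Af) * ρ, signQ q2⁻¹ * ε), Units.ne_zero q1, ?_, ?_⟩,
    ⟨γ₁'⁻¹, Subgroup.inv_mem _ hγ₁mem⟩, ⟨γ₂, hγ₂mem⟩, ?_, ?_, ?_⟩
  · intro v
    rw [Af.mul_apply]
    exact mul_mem (hγ₂mem.1 v) (hρ v)
  · intro v
    rw [hkey, Af.mul_apply]
    exact mul_mem ((zhatUnits.inv_mem hγ₁mem).1 v) (hgρ v)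
  · show diagQ (Units.mk0 (q1 : ℚ) (Units.ne_zero q1)) = γ₁'⁻¹ * g * γ₂⁻¹
    have hmk : Units.mk0 ((q1 : ℚ)) (Units.ne_zero q1) = q1 := Units.ext rfl
    rw [hmk]
    rw [show (γ₁'⁻¹ : Afˣ) * g * γ₂⁻¹ = g * γ₂⁻¹ * γ₁'⁻¹ by
      simp [mul_comm, mul_assoc, mul_left_comm], hg1, mul_inv_cancel_right]
  · rfl
  · show Quot.mk relSh (signQ q2⁻¹ * ε, 1) = shMul ((γ₂ : Afˣ))⁻¹ (Quot.mk relSh (ε, l))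
    rw [shMul_mk]
    refine (Quot.sound ⟨q2⁻¹, rfl, ?_⟩).symm
    rw [hl, map_inv]
    rw [mul_inv_cancel_right, inv_mul_cancel]

/-- The map (g, ρ, ε) ↦ (g, ρ, [ε, 1]) induces a bijection
({±1} × {±1})\U^princ ≅ (Ẑ^× × Ẑ^×)\U. -/
theorem quotient_UPrinc_equiv_quotient_UFull :
    ∃ ψ : Quot relPrinc → Quot relFull,
      Function.Bijective ψ ∧
      ∀ u : UPrinc, ψ (Quot.mk relPrinc u) = Quot.mk relFull (embed u) := by
  refine ⟨Quot.lift (fun u => Quot.mk relFull (embed u))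
      (fun a b h => Quot.sound (key_forward h)), ⟨?_, ?_⟩, fun u => rfl⟩
  · intro x y
    induction x using Quot.ind with
    | _ a =>
      induction y using Quot.ind with
      | _ b =>
        intro h
        replace h : Quot.mk relFull (embed a) = Quot.mk relFull (embed b) := h
        exact Quot.sound (key_backward ((relFull_equiv.eqvGen_iff).mp (Quot.eqvGen_exact h)))
  · intro y
    induction y using Quot.ind with
    | _ w =>
      obtain ⟨t, ht⟩ := exists_embed w
      exact ⟨Quot.mk relPrinc t, (Quot.sound ht).symm⟩
end
end

section
/- Let Sh denote the quotient of {±1} × A_f^× by the action of ℚ^× given by q·(ε, l) = (sign(q)·ε, q·l). Then the map sending u ∈ Ẑ^× to the class of (1, u) in Sh is a bijection from Ẑ^× onto Sh. -/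
open IsDedekindDomain IsDedekindDomain.HeightOneSpectrum

noncomputable section

open Multiplicative

namespace ShAux

/-! ### Components of ideles -/

lemma val_component (q : ℚ) (v : HeightOneSpectrum ℤ) :
    Valued.v ((algebraMap ℚ Af q) v) = v.valuation ℚ q :=
  valuedAdicCompletion_eq_valuation' v q

lemma unit_mul_inv_component (u : Afˣ) (v : HeightOneSpectrum ℤ) :
    ((u : Af) v) * (((u⁻¹ : Afˣ) : Af) v) = 1 := by
  have h : (u * u⁻¹ : Afˣ) = 1 := mul_inv_cancel u
  calc ((u : Af) v) * (((u⁻¹ : Afˣ) : Af) v) = (((u * u⁻¹ : Afˣ) : Af) v) := rfl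
    _ = (((1 : Afˣ) : Af) v) := by rw [h]
    _ = 1 := rfl

lemma valued_unit_ne_zero (u : Afˣ) (v : HeightOneSpectrum ℤ) :
    Valued.v ((u : Af) v) ≠ 0 := by
  intro h
  have h2 := congrArg Valued.v (unit_mul_inv_component u v)
  rw [Valuation.map_mul, h, zero_mul, Valuation.map_one] at h2
  exact zero_ne_one h2

lemma valued_inv_component (u : Afˣ) (v : HeightOneSpectrum ℤ) :
    Valued.v (((u⁻¹ : Afˣ) : Af) v) = (Valued.v ((u : Af) v))⁻¹ := by
  have h2 := congrArg Valued.v (unit_mul_inv_component u v)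
  rw [Valuation.map_mul, Valuation.map_one] at h2
  exact eq_inv_of_mul_eq_one_right (by rw [mul_comm] at h2; rwa [mul_comm])

lemma valued_eq_one_of_mem (u : Afˣ) (v : HeightOneSpectrum ℤ)
    (h1 : (u : Af) v ∈ v.adicCompletionIntegers ℚ)
    (h2 : ((u⁻¹ : Afˣ) : Af) v ∈ v.adicCompletionIntegers ℚ) :
    Valued.v ((u : Af) v) = 1 := by
  have hu : Valued.v ((u : Af) v) ≤ 1 := (v.mem_adicCompletionIntegers ℤ ℚ).mp h1
  have hi : Valued.v (((u⁻¹ : Afˣ) : Af) v) ≤ 1 := (v.mem_adicCompletionIntegers ℤ ℚ).mp h2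
  have h3 := congrArg Valued.v (unit_mul_inv_component u v)
  rw [Valuation.map_mul, Valuation.map_one] at h3
  refine le_antisymm hu ?_
  calc (1 : WithZero (Multiplicative ℤ)) = Valued.v ((u : Af) v) * Valued.v (((u⁻¹ : Afˣ) : Af) v) := h3.symm
    _ ≤ Valued.v ((u : Af) v) * 1 := mul_le_mul_right hi _
    _ = Valued.v ((u : Af) v) := mul_one _

lemma mem_zhatUnits_iff {u : Afˣ} :
    u ∈ zhatUnits ↔ ∀ v : HeightOneSpectrum ℤ, Valued.v ((u : Af) v) = 1 := by
  constructor
  · rintro ⟨h1, h2⟩ v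
    exact valued_eq_one_of_mem u v (h1 v) (h2 v)
  · intro h
    refine ⟨fun v => (v.mem_adicCompletionIntegers ℤ ℚ).mpr (le_of_eq (h v)), fun v => ?_⟩
    rw [v.mem_adicCompletionIntegers ℤ ℚ, valued_inv_component, h v, inv_one]

/-! ### Height-one spectrum of ℤ and rational valuations -/

/-- The positive prime generator of `v`. -/
def pgen (v : HeightOneSpectrum ℤ) : ℤ := |Submodule.IsPrincipal.generator v.asIdeal|

lemma pgen_prime (v : HeightOneSpectrum ℤ) : Prime (pgen v) := by
  have : Prime (Submodule.IsPrincipal.generator v.asIdeal) :=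
    Submodule.IsPrincipal.prime_generator_of_isPrime v.asIdeal v.ne_bot
  exact this.abs

lemma pgen_pos (v : HeightOneSpectrum ℤ) : 0 < pgen v := by
  have := (pgen_prime v).ne_zero
  have h2 : 0 ≤ pgen v := abs_nonneg _
  omega

lemma span_pgen (v : HeightOneSpectrum ℤ) : Ideal.span {pgen v} = v.asIdeal := by
  rcases abs_choice (Submodule.IsPrincipal.generator v.asIdeal) with h | h
  · rw [pgen, h, Ideal.span_singleton_generator]
  · rw [pgen, h, Ideal.span_singleton_neg, Ideal.span_singleton_generator]

lemma valuation_pgen_self (v : HeightOneSpectrum ℤ) :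
    v.valuation ℚ (algebraMap ℤ ℚ (pgen v)) = ofAdd (-1 : ℤ) := by
  rw [valuation_of_algebraMap]
  exact v.intValuation_singleton (pgen_prime v).ne_zero (span_pgen v).symm

lemma valuation_pgen_ne (v w : HeightOneSpectrum ℤ) (hvw : w ≠ v) :
    w.valuation ℚ (algebraMap ℤ ℚ (pgen v)) = 1 := by
  refine le_antisymm (w.valuation_le_one _) ?_
  by_contra h
  have hlt : w.valuation ℚ (algebraMap ℤ ℚ (pgen v)) < 1 := lt_of_le_of_ne (w.valuation_le_one _)
    (by intro h1; exact h (le_of_eq h1.symm))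
  rw [w.valuation_lt_one_iff_dvd, span_pgen, Ideal.dvd_iff_le] at hlt
  have := HeightOneSpectrum.isMaximal v
  exact hvw (HeightOneSpectrum.ext (this.eq_of_le w.isPrime.ne_top hlt).symm)

/-- Constructing an element of the height-one spectrum from a prime. -/
def vOf (p : ℤ) (hp : Prime p) : HeightOneSpectrum ℤ where
  asIdeal := Ideal.span {p}
  isPrime := (Ideal.span_singleton_prime hp.ne_zero).mpr hp
  ne_bot := by simp [Ideal.span_singleton_eq_bot, hp.ne_zero]

lemma vOf_valuation_lt_one_iff (p : ℤ) (hp : Prime p) (n : ℤ) :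
    (vOf p hp).valuation ℚ (algebraMap ℤ ℚ n) < 1 ↔ p ∣ n := by
  rw [valuation_lt_one_iff_dvd, Ideal.dvd_iff_le]
  show Ideal.span {n} ≤ Ideal.span {p} ↔ _
  rw [Ideal.span_singleton_le_span_singleton]


lemma eq_one_or_neg_one_of_valuation_eq_one (q : ℚ) (hq : q ≠ 0)
    (h : ∀ v : HeightOneSpectrum ℤ, v.valuation ℚ q = 1) : q = 1 ∨ q = -1 := by
  have hden0 : (q.den : ℚ) ≠ 0 := Nat.cast_ne_zero.mpr q.den_nz
  have hrel : algebraMap ℤ ℚ q.num = q * algebraMap ℤ ℚ (q.den : ℤ) := by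
    rw [eq_intCast, eq_intCast, Int.cast_natCast]
    exact (div_eq_iff hden0).mp (Rat.num_div_den q)
  have hcop : ∀ p : ℕ, p.Prime → (p : ℤ) ∣ q.num → (p : ℤ) ∣ (q.den : ℤ) → False := by
    intro p hp h1 h2
    have d1 : p ∣ q.num.natAbs := by rwa [Int.natCast_dvd] at h1
    have d2 : p ∣ q.den := by exact_mod_cast h2
    have : p ∣ 1 := q.reduced ▸ Nat.dvd_gcd d1 d2
    exact hp.one_lt.ne' (Nat.dvd_one.mp this)
  have hval : ∀ v : HeightOneSpectrum ℤ, v.valuation ℚ (algebraMap ℤ ℚ q.num)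
      = v.valuation ℚ (algebraMap ℤ ℚ (q.den : ℤ)) := by
    intro v
    rw [hrel, Valuation.map_mul, h v, one_mul]
  have hdvd : ∀ p : ℕ, p.Prime → ((p : ℤ) ∣ q.num ↔ (p : ℤ) ∣ (q.den : ℤ)) := by
    intro p hp
    have hpZ : Prime (p : ℤ) := Nat.prime_iff_prime_int.mp hp
    rw [← vOf_valuation_lt_one_iff _ hpZ, ← vOf_valuation_lt_one_iff _ hpZ, hval]
  have hden1 : q.den = 1 := by
    by_contra hden
    obtain ⟨p, hp, hpd⟩ := Nat.exists_prime_and_dvd hden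
    exact hcop p hp ((hdvd p hp).mpr (Int.natCast_dvd_natCast.mpr hpd))
      (Int.natCast_dvd_natCast.mpr hpd)
  have hnum1 : q.num.natAbs = 1 := by
    by_contra hnum
    obtain ⟨p, hp, hpd⟩ := Nat.exists_prime_and_dvd hnum
    have h1 : (p : ℤ) ∣ q.num := by rwa [Int.natCast_dvd]
    exact hcop p hp h1 ((hdvd p hp).mp h1)
  have hqnum : q = (q.num : ℚ) := by
    conv_lhs => rw [← Rat.num_div_den q]
    rw [hden1]
    simp
  rcases Int.natAbs_eq_iff.mp hnum1 with h1 | h1 <;> rw [hqnum, h1] <;> simp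


/-! ### Sign lemmas -/

lemma signQ_one : signQ 1 = 1 := by simp [signQ]

lemma signQ_mul (a b : ℚˣ) : signQ (a * b) = signQ a * signQ b := by
  unfold signQ
  by_cases h1 : 0 < (a : ℚ) <;> by_cases h2 : 0 < (b : ℚ)
  · simp [Units.val_mul, mul_pos h1 h2, h1, h2]
  · have hb : (b : ℚ) < 0 := lt_of_le_of_ne (not_lt.mp h2) b.ne_zero
    simp [Units.val_mul, h1, h2, (mul_neg_of_pos_of_neg h1 hb).not_gt]
  · have ha : (a : ℚ) < 0 := lt_of_le_of_ne (not_lt.mp h1) a.ne_zero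
    simp [Units.val_mul, h1, h2, (mul_neg_of_neg_of_pos ha h2).not_gt]
  · have ha : (a : ℚ) < 0 := lt_of_le_of_ne (not_lt.mp h1) a.ne_zero
    have hb : (b : ℚ) < 0 := lt_of_le_of_ne (not_lt.mp h2) b.ne_zero
    simp [Units.val_mul, h1, h2, mul_pos_of_neg_of_neg ha hb]

lemma signQ_inv (a : ℚˣ) : signQ a⁻¹ = signQ a := by
  unfold signQ
  have : (0 < ((a⁻¹ : ℚˣ) : ℚ)) ↔ 0 < (a : ℚ) := by
    rw [Units.val_inv_eq_inv_val, inv_pos]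
  simp only [this]

lemma relSh_equivalence : Equivalence relSh where
  refl p := ⟨1, by simp [signQ_one], by simp⟩
  symm := by
    rintro p p' ⟨q, h1, h2⟩
    refine ⟨q⁻¹, ?_, ?_⟩
    · rw [h1, ← mul_assoc, ← signQ_mul, inv_mul_cancel q, signQ_one, one_mul]
    · rw [h2, map_inv, inv_mul_cancel_left]
  trans := by
    rintro p p' p'' ⟨q, h1, h2⟩ ⟨q', h1', h2'⟩
    refine ⟨q' * q, ?_, ?_⟩
    · rw [h1', h1, signQ_mul, mul_assoc]
    · rw [h2', h2, map_mul, mul_assoc]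

/-! ### The diagonal embedding and valuations -/

lemma valued_diagQ (q : ℚˣ) (v : HeightOneSpectrum ℤ) :
    Valued.v (((diagQ q : Afˣ) : Af) v) = v.valuation ℚ (q : ℚ) :=
  val_component _ v

lemma unit_mul_component (a b : Afˣ) (v : HeightOneSpectrum ℤ) :
    ((a * b : Afˣ) : Af) v = ((a : Af) v) * ((b : Af) v) := rfl

end ShAux

open ShAux in
theorem zhatUnits_equiv_Sh' :
    Function.Bijective (fun u : zhatUnits => Quot.mk relSh (1, (u : Afˣ))) := by
  constructor
  · -- injectivity
    intro a b hab
    obtain ⟨q, h1, h2⟩ :=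
      (Equivalence.eqvGen_iff relSh_equivalence).mp (Quot.eqvGen_exact hab)
    simp only at h1 h2
    have hq1 : ∀ v : HeightOneSpectrum ℤ, v.valuation ℚ (q : ℚ) = 1 := by
      intro v
      have hb := mem_zhatUnits_iff.mp b.2 v
      have ha := mem_zhatUnits_iff.mp a.2 v
      have hc := congrArg (fun z : Afˣ => Valued.v ((z : Af) v)) h2
      simp only [unit_mul_component, Valuation.map_mul] at hc
      rw [hb, ha, mul_one, valued_diagQ] at hc
      exact hc.symm
    have hqpos : signQ q = 1 := by rw [mul_one] at h1; exact h1.symm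
    have hq : (q : ℚ) = 1 := by
      rcases eq_one_or_neg_one_of_valuation_eq_one (q : ℚ) q.ne_zero hq1 with h | h
      · exact h
      · exfalso
        rw [signQ, h] at hqpos
        norm_num at hqpos
    have hq' : q = 1 := Units.ext hq
    rw [hq', map_one, one_mul] at h2
    exact Subtype.ext h2.symm
  · -- surjectivity
    intro y
    induction y using Quot.ind with
    | _ p =>
    obtain ⟨ε, x⟩ := p
    classical
    have hne : ∀ v, Valued.v ((x : Af) v) ≠ 0 := valued_unit_ne_zero x
    have hfin : {v : HeightOneSpectrum ℤ | Valued.v ((x : Af) v) ≠ 1}.Finite := by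
      have h1 : {v : HeightOneSpectrum ℤ | (x : Af) v ∉ v.adicCompletionIntegers ℚ}.Finite :=
        Filter.eventually_cofinite.mp (x : Af).2
      have h2 : {v : HeightOneSpectrum ℤ |
          ((x⁻¹ : Afˣ) : Af) v ∉ v.adicCompletionIntegers ℚ}.Finite :=
        Filter.eventually_cofinite.mp ((x⁻¹ : Afˣ) : Af).2
      refine (h1.union h2).subset ?_
      intro v hv
      by_contra hcon
      simp only [Set.mem_union, Set.mem_setOf_eq, not_or, not_not] at hcon
      exact hv (valued_eq_one_of_mem x v hcon.1 hcon.2)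
    set T := hfin.toFinset with hT
    set m : HeightOneSpectrum ℤ → ℤ := fun v => Multiplicative.toAdd (WithZero.unzero (hne v))
      with hmdef
    have hm : ∀ v, Valued.v ((x : Af) v)
        = ((Multiplicative.ofAdd (m v) : Multiplicative ℤ) : WithZero (Multiplicative ℤ)) := by
      intro v
      simp only [hmdef, ofAdd_toAdd, WithZero.coe_unzero]
    set q0 : ℚ := ∏ v ∈ T, (algebraMap ℤ ℚ (pgen v)) ^ (-(m v)) with hq0
    have hq0pos : 0 < q0 := by
      refine Finset.prod_pos fun v _ => zpow_pos ?_ _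
      rw [eq_intCast]
      exact_mod_cast pgen_pos v
    have hq0val : ∀ v, v.valuation ℚ q0 = Valued.v ((x : Af) v) := by
      intro v
      rw [hq0, map_prod]
      by_cases hvT : v ∈ T
      · rw [Finset.prod_eq_single_of_mem v hvT (fun w hw hwv => by
          rw [map_zpow₀, valuation_pgen_ne w v hwv.symm, one_zpow])]
        rw [map_zpow₀, valuation_pgen_self, hm v, ← WithZero.coe_zpow, ← ofAdd_zsmul]
        congr 1
        simp [smul_eq_mul]
      · rw [Finset.prod_eq_one (fun w hw => by
          rw [map_zpow₀, valuation_pgen_ne w v (by rintro rfl; exact hvT hw), one_zpow])]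
        have : v ∉ {v : HeightOneSpectrum ℤ | Valued.v ((x : Af) v) ≠ 1} := by
          rwa [← hfin.mem_toFinset]
        simp only [Set.mem_setOf_eq, not_not] at this
        rw [this]
    have hqrne : (((ε : ℤ) : ℚ) * q0) ≠ 0 := by
      rcases Int.units_eq_one_or ε with h | h <;> rw [h] <;> push_cast <;>
        simp [hq0pos.ne']
    set qu : ℚˣ := Units.mk0 _ hqrne with hqu
    have hqucoe : (qu : ℚ) = ((ε : ℤ) : ℚ) * q0 := rfl
    have hqval : ∀ v, v.valuation ℚ (qu : ℚ) = Valued.v ((x : Af) v) := by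
      intro v
      have hε : v.valuation ℚ (((ε : ℤ) : ℚ)) = 1 := by
        rcases Int.units_eq_one_or ε with h | h <;> rw [h] <;> push_cast <;>
          simp [Valuation.map_neg, Valuation.map_one]
      rw [hqucoe, Valuation.map_mul, hε, one_mul, hq0val]
    set u : Afˣ := (diagQ qu)⁻¹ * x with hu_def
    have hu : u ∈ zhatUnits := by
      refine mem_zhatUnits_iff.mpr fun v => ?_
      rw [hu_def, unit_mul_component, Valuation.map_mul, ← map_inv, valued_diagQ]
      rw [Units.val_inv_eq_inv_val, map_inv₀, hqval v]
      exact inv_mul_cancel₀ (hne v)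
    refine ⟨⟨u, hu⟩, Quot.sound ⟨qu, ?_, ?_⟩⟩
    · show ε = signQ qu * 1
      rw [mul_one, signQ]
      rcases Int.units_eq_one_or ε with h | h
      · have hpos : 0 < (qu : ℚ) := by rw [hqucoe, h]; push_cast; simpa using hq0pos
        rw [if_pos hpos, h]
      · have hneg : (qu : ℚ) < 0 := by
          rw [hqucoe, h]; push_cast; simpa using neg_neg_iff_pos.mpr hq0pos
        rw [if_neg hneg.not_gt, h]
    · show x = diagQ qu * (1, u).2
      show x = diagQ qu * u
      rw [hu_def, mul_inv_cancel_left]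

/-- The map u ↦ [1, u] is a bijection from Ẑ^× onto Sh(𝔾_m, {±1}). -/
theorem zhatUnits_equiv_Sh :
    Function.Bijective (fun u : zhatUnits => Quot.mk relSh (1, (u : Afˣ))) :=
  zhatUnits_equiv_Sh'
end
end

section
/- Let Z_BC := {(g, ρ) ∈ ℚ_{>0} × Ẑ : g·ρ ∈ Ẑ}. For functions f₁, f₂ : Z_BC → ℂ define the convolution (f₁ * f₂)(g, ρ) = Σ_{h ∈ ℚ_{>0}, h·ρ ∈ Ẑ} f₁(g·h⁻¹, h·ρ)·f₂(h, ρ) (whenever only finitely many terms are nonzero) and the adjoint f*(g, ρ) = conj(f(g⁻¹, g·ρ)). For n ∈ ℕ_{>0} let μ_n : Z_BC → ℂ be μ_n(g, ρ) = 1 if g = 1/n and 0 otherwise. Then for every finitely supported f : Z_BC → ℂ and every (g, ρ) ∈ Z_BC, all convolutions below are given by finite sums, (g, n·ρ) ∈ Z_BC, and (μ_n * f * μ_n*)(g, ρ) = f(g, n·ρ). -/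
open IsDedekindDomain IsDedekindDomain.HeightOneSpectrum

noncomputable section

/-- The Bost–Connes groupoid: pairs (g, ρ) ∈ ℚ_{>0} × Ẑ with g·ρ ∈ Ẑ. -/
def ZBC : Type :=
  {p : ℚ × Af // 0 < p.1 ∧ IsIntegralAdele p.2 ∧ IsIntegralAdele (algebraMap ℚ Af p.1 * p.2)}

/-- The index set of the Bost–Connes convolution at the point (g, ρ):
positive rationals h with h·ρ ∈ Ẑ. -/
def Dom (p : ZBC) : Type :=
  {h : ℚ // 0 < h ∧ IsIntegralAdele (algebraMap ℚ Af h * p.1.2)}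

/-- The point (g·h⁻¹, h·ρ) of the Bost–Connes groupoid. -/
def leftArg (p : ZBC) (h : Dom p) : ZBC :=
  ⟨(p.1.1 / h.1, algebraMap ℚ Af h.1 * p.1.2),
    div_pos p.2.1 h.2.1, h.2.2, by
      have key : algebraMap ℚ Af (p.1.1 / h.1) * (algebraMap ℚ Af h.1 * p.1.2) =
          algebraMap ℚ Af p.1.1 * p.1.2 := by
        rw [← mul_assoc, ← map_mul, div_mul_cancel₀ _ (ne_of_gt h.2.1)]
      rw [key]; exact p.2.2.2⟩

/-- The point (h, ρ) of the Bost–Connes groupoid. -/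
def rightArg (p : ZBC) (h : Dom p) : ZBC :=
  ⟨(h.1, p.1.2), h.2.1, p.2.2.1, h.2.2⟩

/-- The convolution product of the Bost–Connes Hecke algebra:
(f₁ * f₂)(g, ρ) = Σ_{h > 0, h·ρ ∈ Ẑ} f₁(g·h⁻¹, h·ρ)·f₂(h, ρ). -/
def conv (f₁ f₂ : ZBC → ℂ) (p : ZBC) : ℂ :=
  ∑' h : Dom p, f₁ (leftArg p h) * f₂ (rightArg p h)

/-- The adjoint of the Bost–Connes Hecke algebra: f*(g, ρ) = conj f(g⁻¹, g·ρ). -/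
def adjBC (f : ZBC → ℂ) (p : ZBC) : ℂ :=
  (starRingEnd ℂ) (f ⟨(p.1.1⁻¹, algebraMap ℚ Af p.1.1 * p.1.2),
    inv_pos.2 p.2.1, p.2.2.2, by
      have key : algebraMap ℚ Af p.1.1⁻¹ * (algebraMap ℚ Af p.1.1 * p.1.2) = p.1.2 := by
        rw [← mul_assoc, ← map_mul, inv_mul_cancel₀ (ne_of_gt p.2.1), map_one, one_mul]
      rw [key]; exact p.2.2.1⟩)

/-- μ_n(g, ρ) = 1 if g = 1/n and 0 otherwise. -/
def mu (n : ℕ+) : ZBC → ℂ := fun p => if p.1.1 = 1 / (n : ℚ) then 1 else 0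

/-! ### Auxiliary lemmas -/

lemma natMul_integral (m : ℕ) {x : Af} (hx : IsIntegralAdele x) :
    IsIntegralAdele (algebraMap ℚ Af (m : ℚ) * x) := by
  have hm : algebraMap ℚ Af (m : ℚ) = (m : Af) := by push_cast; rfl
  rw [hm]
  intro v
  have h1 : ((m : Af) * x) v = (m : v.adicCompletion ℚ) * x v := by
    have : ((m : Af)) v = (m : v.adicCompletion ℚ) := by push_cast; rfl
    rw [show ((m : Af) * x) v = ((m : Af)) v * x v from rfl, this]
  rw [h1]
  exact mul_mem (natCast_mem _ m) (hx v)

lemma div_eq_one_div_iff' {g h c : ℚ} (hg : g ≠ 0) (hh : h ≠ 0) (hc : c ≠ 0) :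
    g / h = 1 / c ↔ h = c * g := by
  rw [div_eq_div_iff hh hc]
  constructor <;> intro H <;> linarith

/-- The canonical element n·q.1.1 of Dom q. -/
def domElt (n : ℕ+) (q : ZBC) : Dom q :=
  ⟨(n : ℚ) * q.1.1, mul_pos (by exact_mod_cast n.pos) q.2.1, by
    rw [map_mul, mul_assoc]
    exact natMul_integral n q.2.2.2⟩

lemma mu_leftArg_eq_zero (n : ℕ+) (q : ZBC) (h : Dom q) (hne : h ≠ domElt n q) :
    mu n (leftArg q h) = 0 := by
  have hq : q.1.1 ≠ 0 := ne_of_gt q.2.1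
  have hh : h.1 ≠ 0 := ne_of_gt h.2.1
  have hn : (n : ℚ) ≠ 0 := by positivity
  unfold mu leftArg
  rw [if_neg]
  intro H
  exact hne (Subtype.ext ((div_eq_one_div_iff' hq hh hn).1 H))

lemma inner_support (n : ℕ+) (f : ZBC → ℂ) (q : ZBC) :
    (Function.support fun h : Dom q => mu n (leftArg q h) * f (rightArg q h)).Finite := by
  apply Set.Subsingleton.finite
  intro a ha b hb
  by_contra hab
  rcases ne_or_eq a (domElt n q) with h1 | h1
  · exact ha (show mu n (leftArg q a) * f (rightArg q a) = 0 by
      rw [mu_leftArg_eq_zero n q a h1, zero_mul])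
  · have h2 : b ≠ domElt n q := fun hb2 => hab (h1.trans hb2.symm)
    exact hb (show mu n (leftArg q b) * f (rightArg q b) = 0 by
      rw [mu_leftArg_eq_zero n q b h2, zero_mul])

lemma inner_eq (n : ℕ+) (f : ZBC → ℂ) (q : ZBC) :
    conv (mu n) f q = f ⟨((n : ℚ) * q.1.1, q.1.2), mul_pos (by exact_mod_cast n.pos) q.2.1, q.2.2.1,
      (domElt n q).2.2⟩ := by
  have hq : q.1.1 ≠ 0 := ne_of_gt q.2.1
  have hn : (n : ℚ) ≠ 0 := by positivity
  unfold conv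
  rw [tsum_eq_single (domElt n q) (fun h hne => by
    rw [mu_leftArg_eq_zero n q h hne, zero_mul])]
  have hmu : mu n (leftArg q (domElt n q)) = 1 := by
    unfold mu leftArg domElt
    rw [if_pos ((div_eq_one_div_iff' hq (by positivity) hn).2 rfl)]
  rw [hmu, one_mul]
  rfl

lemma adj_mu_eq_zero (n : ℕ+) (p : ZBC) (h : Dom p) (hne : h.1 ≠ (n : ℚ)) :
    adjBC (mu n) (rightArg p h) = 0 := by
  have hh : h.1 ≠ 0 := ne_of_gt h.2.1
  have hn : (n : ℚ) ≠ 0 := by positivity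
  unfold adjBC mu rightArg
  rw [if_neg, map_zero]
  intro H
  simp only at H
  apply hne
  field_simp at H
  rw [H]

/-- The symmetry θ_n(f)(g, ρ) = f(g, n·ρ) of the Bost–Connes system is the inner
automorphism implemented by μ_n: for finitely supported f, all convolutions are given by
finite sums, (g, n·ρ) ∈ Z_BC, and (μ_n * f * μ_n*)(g, ρ) = f(g, n·ρ). -/
theorem mu_conv_mu_star (n : ℕ+) (f : ZBC → ℂ) (hf : (Function.support f).Finite)
    (p : ZBC) :
    ∃ hmem : IsIntegralAdele (algebraMap ℚ Af (n : ℚ) * p.1.2) ∧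
        IsIntegralAdele (algebraMap ℚ Af p.1.1 * (algebraMap ℚ Af (n : ℚ) * p.1.2)),
      (∀ q : ZBC,
        (Function.support fun h : Dom q => mu n (leftArg q h) * f (rightArg q h)).Finite) ∧
      (Function.support fun h : Dom p =>
        conv (mu n) f (leftArg p h) * adjBC (mu n) (rightArg p h)).Finite ∧
      conv (conv (mu n) f) (adjBC (mu n)) p =
        f ⟨(p.1.1, algebraMap ℚ Af (n : ℚ) * p.1.2), p.2.1, hmem.1, hmem.2⟩ := by
  have hn : (n : ℚ) ≠ 0 := by positivity
  have hmem1 : IsIntegralAdele (algebraMap ℚ Af (n : ℚ) * p.1.2) :=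
    natMul_integral n p.2.2.1
  have hmem2 : IsIntegralAdele (algebraMap ℚ Af p.1.1 *
      (algebraMap ℚ Af (n : ℚ) * p.1.2)) := by
    rw [mul_left_comm]
    exact natMul_integral n p.2.2.2
  refine ⟨⟨hmem1, hmem2⟩, inner_support n f, ?_, ?_⟩
  · apply Set.Subsingleton.finite
    intro a ha b hb
    by_contra hab
    rcases ne_or_eq a.1 (n : ℚ) with h1 | h1
    · exact ha (show conv (mu n) f (leftArg p a) * adjBC (mu n) (rightArg p a) = 0 by
        rw [adj_mu_eq_zero n p a h1, mul_zero])
    · have h2 : b.1 ≠ (n : ℚ) := fun hb2 => hab (Subtype.ext (h1.trans hb2.symm))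
      exact hb (show conv (mu n) f (leftArg p b) * adjBC (mu n) (rightArg p b) = 0 by
        rw [adj_mu_eq_zero n p b h2, mul_zero])
  · set h₁ : Dom p := ⟨(n : ℚ), by exact_mod_cast n.pos, hmem1⟩ with hh₁
    show (∑' h : Dom p, conv (mu n) f (leftArg p h) * adjBC (mu n) (rightArg p h)) = _
    rw [tsum_eq_single h₁ (fun h hne => by
      rw [adj_mu_eq_zero n p h (fun H => hne (Subtype.ext (by rw [H, hh₁]))), mul_zero])]
    have hadj : adjBC (mu n) (rightArg p h₁) = 1 := by
      unfold adjBC mu rightArg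
      rw [if_pos (by simp [one_div, hh₁]), map_one]
    rw [hadj, mul_one, inner_eq]
    congr 1
    apply Subtype.ext
    show ((n : ℚ) * ((leftArg p h₁).1.1), (leftArg p h₁).1.2) = _
    unfold leftArg
    simp only
    rw [Prod.mk.injEq]
    exact ⟨by simp only [hh₁]; field_simp, rfl⟩
end
end
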